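/- Cramér's (Lundberg) exponential bound for ruin: in a random walk S_n = X_1 + ⋯ + X_n with i.i.d. real increments X_i having E[X_1] > 0 and with some R > 0 satisfying E[exp(−R X_1)] = 1, the probability that inf_n S_n ≤ −u (ruin with initial capital u ≥ 0) is at most exp(−R u). -/

import Mathlib

open MeasureTheory ProbabilityTheory

theorem cramer_lundberg_ruin_bound
    {Ω : Type*} [MeasurableSpace Ω] (P : Measure Ω) [IsProbabilityMeasure P]
    (X : ℕ → Ω → ℝ)
    (hmeas : ∀ i, Measurable (X i))
    (hindep : iIndepFun X P)
    (hident : ∀ i, IdentDistrib (X i) (X 0) P P)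
    (hmean : 0 < ∫ ω, X 0 ω ∂P)
    (R : ℝ) (hR : 0 < R)
    (hadj : ∫ ω, Real.exp (-R * X 0 ω) ∂P = 1)
    (u : ℝ) (hu : 0 ≤ u) :
    P {ω | ∃ n : ℕ, (∑ i ∈ Finset.range (n + 1), X i ω) ≤ -u}
      ≤ ENNReal.ofReal (Real.exp (-R * u)) := by
  classical
  -- partial sums
  set S : ℕ → Ω → ℝ := fun n ω => ∑ i ∈ Finset.range (n + 1), X i ω with hS
  have hSmeas : ∀ n, Measurable (S n) := fun n =>
    Finset.measurable_sum _ fun i _ => hmeas i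
  -- the exponential weights
  set g : ℝ → ENNReal := fun x => ENNReal.ofReal (Real.exp (-R * x)) with hg
  have hgmeas : Measurable g :=
    ENNReal.measurable_ofReal.comp (Real.measurable_exp.comp (measurable_id.const_mul (-R)))
  set W : ℕ → Ω → ENNReal := fun i ω => g (X i ω) with hW
  have hWmeas : ∀ i, Measurable (W i) := fun i => hgmeas.comp (hmeas i)
  have hWindep : iIndepFun W P :=
    hindep.comp (fun _ => g) (fun _ => hgmeas)
  -- each weight has lintegral 1
  have h0int : Integrable (fun ω => Real.exp (-R * X 0 ω)) P := by
    by_contra h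
    rw [integral_undef h] at hadj
    norm_num at hadj
  have hW1 : ∀ i, ∫⁻ ω, W i ω ∂P = 1 := by
    intro i
    have hid : IdentDistrib (fun ω => Real.exp (-R * X i ω)) (fun ω => Real.exp (-R * X 0 ω))
        P P := (hident i).comp (Real.measurable_exp.comp (measurable_id.const_mul (-R)))
    have hint : Integrable (fun ω => Real.exp (-R * X i ω)) P := hid.integrable_iff.mpr h0int
    have := ofReal_integral_eq_lintegral_ofReal hint
      (Filter.Eventually.of_forall fun ω => (Real.exp_pos _).le)
    rw [hid.integral_eq, hadj] at this
    simpa [hW, hg] using this.symm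
  -- lintegral of a product of weights over any finset is 1
  have hprod : ∀ s : Finset ℕ, ∫⁻ ω, ∏ i ∈ s, W i ω ∂P = 1 := by
    intro s
    induction s using Finset.induction with
    | empty => simp
    | @insert a s ha ih =>
      have hind : IndepFun (∏ j ∈ s, W j) (W a) P :=
        hWindep.indepFun_finset_prod_of_notMem hWmeas ha
      have hm : Measurable (∏ j ∈ s, W j) := by
        rw [Finset.prod_fn]
        exact Finset.measurable_prod _ fun i _ => hWmeas i
      have := lintegral_mul_eq_lintegral_mul_lintegral_of_indepFun hm (hWmeas a) hind
      calc ∫⁻ ω, ∏ i ∈ insert a s, W i ω ∂P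
          = ∫⁻ ω, ((∏ j ∈ s, W j) * W a) ω ∂P := by
            refine lintegral_congr fun ω => ?_
            simp [Finset.prod_insert ha, mul_comm]
        _ = (∫⁻ ω, (∏ j ∈ s, W j) ω ∂P) * ∫⁻ ω, W a ω ∂P := this
        _ = 1 := by
            rw [hW1 a, mul_one, ← ih]
            exact lintegral_congr fun ω => by simp
  -- product of weights as ofReal of exp of sum
  have hprodeq : ∀ (s : Finset ℕ) (ω : Ω),
      ∏ i ∈ s, W i ω = ENNReal.ofReal (Real.exp (∑ i ∈ s, -R * X i ω)) := by
    intro s ω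
    induction s using Finset.induction with
    | empty => simp
    | @insert a s ha ih =>
      rw [Finset.prod_insert ha, Finset.sum_insert ha, Real.exp_add, ih,
        ENNReal.ofReal_mul (Real.exp_pos _).le]
  -- the first-passage sets
  set A : ℕ → Set Ω := fun n => {ω | (∀ k < n, -u < S k ω) ∧ S n ω ≤ -u} with hA
  have hAmeas : ∀ n, MeasurableSet (A n) := by
    intro n
    have : A n = (⋂ k, ⋂ _ : k < n, {ω | -u < S k ω}) ∩ {ω | S n ω ≤ -u} := by
      ext ω; simp [hA, Set.mem_iInter]
    rw [this]
    exact (MeasurableSet.iInter fun k => MeasurableSet.iInter fun _ =>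
      measurableSet_lt measurable_const (hSmeas k)).inter
      (measurableSet_le (hSmeas n) measurable_const)
  have hdisj' : ∀ m n, m < n → Disjoint (A m) (A n) := by
    intro m n hmn
    refine Set.disjoint_left.mpr fun ω hm hn => ?_
    exact absurd (hn.1 m hmn) (not_lt.mpr hm.2)
  have hdisj : Pairwise (Function.onFun Disjoint A) := by
    intro m n hmn
    rcases hmn.lt_or_gt with h | h
    · exact hdisj' m n h
    · exact (hdisj' n m h).symm
  have hUnion : {ω | ∃ n : ℕ, S n ω ≤ -u} = ⋃ n, A n := by
    ext ω
    simp only [Set.mem_setOf_eq, Set.mem_iUnion]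
    constructor
    · rintro h
      refine ⟨Nat.find h, fun k hk => not_le.mp (Nat.find_min h hk), Nat.find_spec h⟩
    · rintro ⟨n, _, h2⟩
      exact ⟨n, h2⟩
  -- the key constant
  set c : ENNReal := ENNReal.ofReal (Real.exp (R * u)) with hc
  -- key estimate per n < N
  have hkey : ∀ N n, n ∈ Finset.range N →
      c * P (A n) ≤ ∫⁻ ω in A n, ∏ i ∈ Finset.range N, W i ω ∂P := by
    intro N n hn
    rw [Finset.mem_range] at hn
    set F : Ω → ENNReal := (A n).indicator fun ω => ∏ i ∈ Finset.range (n + 1), W i ω with hF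
    set G : Ω → ENNReal := fun ω => ∏ i ∈ Finset.Ico (n + 1) N, W i ω with hG
    have hFmeas : Measurable F :=
      (Finset.measurable_prod _ fun i _ => hWmeas i).indicator (hAmeas n)
    have hGmeas : Measurable G := Finset.measurable_prod _ fun i _ => hWmeas i
    -- independence of F and G via block σ-algebras
    have hFG : IndepFun F G P := by
      set mS : MeasurableSpace Ω := ⨆ i ∈ {i : ℕ | i ≤ n}, MeasurableSpace.comap (X i)
        inferInstance with hmS
      set mT : MeasurableSpace Ω := ⨆ i ∈ {i : ℕ | n < i}, MeasurableSpace.comap (X i)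
        inferInstance with hmT
      have hST : Indep mS mT P :=
        indep_iSup_of_disjoint (fun i => (hmeas i).comap_le) hindep
          (Set.disjoint_left.mpr fun i (hi : i ≤ n) (hi' : n < i) => absurd hi' (not_lt.2 hi))
      have hXS : ∀ i, i ≤ n → Measurable[mS] (X i) := fun i hi =>
        measurable_iff_comap_le.mpr
          (le_biSup (fun j => MeasurableSpace.comap (X j)
            (inferInstance : MeasurableSpace ℝ)) (show i ∈ {j : ℕ | j ≤ n} from hi))
      have hXT : ∀ i, n < i → Measurable[mT] (X i) := fun i hi =>
        measurable_iff_comap_le.mpr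
          (le_biSup (fun j => MeasurableSpace.comap (X j)
            (inferInstance : MeasurableSpace ℝ)) (show i ∈ {j : ℕ | n < j} from hi))
      have hSms : ∀ k, k ≤ n → Measurable[mS] (S k) := fun k hk =>
        Finset.measurable_sum _ fun i hi =>
          hXS i (le_trans (Nat.lt_succ_iff.mp (Finset.mem_range.mp hi)) hk)
      have hAS : MeasurableSet[mS] (A n) := by
        have : A n = (⋂ k, ⋂ _ : k < n, {ω | -u < S k ω}) ∩ {ω | S n ω ≤ -u} := by
          ext ω; simp [hA, Set.mem_iInter]
        rw [this]
        exact (MeasurableSet.iInter fun k => MeasurableSet.iInter fun hk =>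
          measurableSet_lt measurable_const (hSms k hk.le)).inter
          (measurableSet_le (hSms n le_rfl) measurable_const)
      have hFms : Measurable[mS] F :=
        (Finset.measurable_prod _ fun i hi => hgmeas.comp
          (hXS i (Nat.lt_succ_iff.mp (Finset.mem_range.mp hi)))).indicator hAS
      have hGms : Measurable[mT] G :=
        Finset.measurable_prod _ fun i hi => hgmeas.comp
          (hXT i (Nat.lt_of_succ_le (Finset.mem_Ico.mp hi).1))
      exact indep_of_indep_of_le_left (indep_of_indep_of_le_right hST hGms.comap_le)
        hFms.comap_le
    have hsplit : ∀ ω, ∏ i ∈ Finset.range N, W i ω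
        = (∏ i ∈ Finset.range (n + 1), W i ω) * ∏ i ∈ Finset.Ico (n + 1) N, W i ω :=
      fun ω => (Finset.prod_range_mul_prod_Ico _ (Nat.succ_le_of_lt hn)).symm
    have step1 : ∫⁻ ω in A n, ∏ i ∈ Finset.range N, W i ω ∂P = ∫⁻ ω, F ω * G ω ∂P := by
      rw [← lintegral_indicator (hAmeas n)]
      refine lintegral_congr fun ω => ?_
      by_cases hω : ω ∈ A n
      · simp [hF, Set.indicator_of_mem hω, hsplit ω, hG]
      · simp [hF, Set.indicator_of_notMem hω]
    have step2 : ∫⁻ ω, F ω * G ω ∂P = (∫⁻ ω, F ω ∂P) * ∫⁻ ω, G ω ∂P := by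
      have := lintegral_mul_eq_lintegral_mul_lintegral_of_indepFun hFmeas hGmeas hFG
      simpa using this
    have step4 : ∫⁻ ω, G ω ∂P = 1 := hprod _
    have step5 : c * P (A n) ≤ ∫⁻ ω, F ω ∂P := by
      rw [hF, lintegral_indicator (hAmeas n)]
      calc c * P (A n) = ∫⁻ _ in A n, c ∂P := (setLIntegral_const _ _).symm
        _ ≤ ∫⁻ ω in A n, ∏ i ∈ Finset.range (n + 1), W i ω ∂P := by
            refine setLIntegral_mono (Finset.measurable_prod _ fun i _ => hWmeas i)
              fun ω hω => ?_
            rw [hprodeq]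
            have hsum : ∑ i ∈ Finset.range (n + 1), -R * X i ω = -R * S n ω := by
              rw [hS]; rw [Finset.mul_sum]
            rw [hsum]
            refine ENNReal.ofReal_le_ofReal (Real.exp_le_exp.2 ?_)
            have h1 : S n ω ≤ -u := hω.2
            nlinarith [hω.2, hR]
    calc c * P (A n) ≤ ∫⁻ ω, F ω ∂P := step5
      _ = (∫⁻ ω, F ω ∂P) * 1 := (mul_one _).symm
      _ = (∫⁻ ω, F ω ∂P) * ∫⁻ ω, G ω ∂P := by rw [step4]
      _ = ∫⁻ ω, F ω * G ω ∂P := step2.symm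
      _ = ∫⁻ ω in A n, ∏ i ∈ Finset.range N, W i ω ∂P := step1.symm
  -- sum over n < N
  have hfinal : ∀ N : ℕ, c * ∑ n ∈ Finset.range N, P (A n) ≤ 1 := by
    intro N
    rw [Finset.mul_sum]
    calc ∑ n ∈ Finset.range N, c * P (A n)
        ≤ ∑ n ∈ Finset.range N, ∫⁻ ω in A n, ∏ i ∈ Finset.range N, W i ω ∂P :=
          Finset.sum_le_sum (hkey N)
      _ = ∫⁻ ω in ⋃ n ∈ Finset.range N, A n, ∏ i ∈ Finset.range N, W i ω ∂P :=
          (lintegral_biUnion_finset (fun m _ n _ hmn => hdisj hmn)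
            (fun n _ => hAmeas n) _).symm
      _ ≤ ∫⁻ ω, ∏ i ∈ Finset.range N, W i ω ∂P := setLIntegral_le_lintegral _ _
      _ = 1 := hprod _
  -- conclude
  have hc0 : c ≠ 0 := by
    simp [hc, ENNReal.ofReal_eq_zero, not_le, Real.exp_pos]
  have hmain : P {ω | ∃ n : ℕ, S n ω ≤ -u} ≤ c⁻¹ := by
    rw [hUnion, measure_iUnion hdisj hAmeas, ENNReal.tsum_eq_iSup_nat]
    refine iSup_le fun N => ?_
    exact ENNReal.le_inv_iff_mul_le.mpr (by rw [mul_comm]; exact hfinal N)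
  have hcinv : c⁻¹ = ENNReal.ofReal (Real.exp (-R * u)) := by
    rw [show -R * u = -(R * u) by ring, Real.exp_neg, ENNReal.ofReal_inv_of_pos (Real.exp_pos _),
      hc]
  rw [← hcinv]
  exact hmain
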